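/- The curve z(s) = (cos(sμ) + i(B/μ)sin(sμ))e^{−iBs}, w(s) = ((C+iD)/μ)sin(sμ)e^{iBs}, μ = √(B²+C²+D²), is horizontal: Im(z̄ ż) + Im(w ẇ̄) = 0 for all s, equivalently −x₂ẋ₁+x₁ẋ₂+x₄ẋ₃−x₃ẋ₄ = 0 where z = x₁+ix₂, w = x₃+ix₄. -/

import Mathlib

set_option maxHeartbeats 1000000

/-- The geodesics are horizontal curves: Im(z̄ż) + Im(wẇ̄) = 0. -/
theorem geodesic_horizontal (B C D : ℝ) (hCD : ¬(C = 0 ∧ D = 0)) :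
    let μ : ℝ := Real.sqrt (B^2 + C^2 + D^2)
    let z : ℝ → ℂ := fun s =>
      (Complex.cos (s * μ) + Complex.I * (B / μ) * Complex.sin (s * μ))
        * Complex.exp (-Complex.I * B * s)
    let w : ℝ → ℂ := fun s =>
      ((C : ℂ) + Complex.I * D) / μ * Complex.sin (s * μ)
        * Complex.exp (Complex.I * B * s)
    ∀ s : ℝ, ((starRingEnd ℂ) (z s) * deriv z s).im
      + (w s * (starRingEnd ℂ) (deriv w s)).im = 0 := by
  intro μ z w s
  have hμ2 : μ^2 = B^2 + C^2 + D^2 := Real.sq_sqrt (by positivity)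
  have hμ : μ ≠ 0 := by
    intro h
    rw [h] at hμ2
    exact hCD ⟨by nlinarith [sq_nonneg B, sq_nonneg C, sq_nonneg D],
      by nlinarith [sq_nonneg B, sq_nonneg C, sq_nonneg D]⟩
  have hzdef : z = fun t : ℝ =>
      ((↑(Real.cos (t*μ)) + Complex.I * ↑(B/μ) * ↑(Real.sin (t*μ)))
        * Complex.exp (-Complex.I * ↑B * ↑t) : ℂ) := by
    funext t; show (Complex.cos _ + _) * _ = _; push_cast; ring
  have hwdef : w = fun t : ℝ =>
      (((↑(C/μ) + Complex.I * ↑(D/μ)) * ↑(Real.sin (t*μ)))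
        * Complex.exp (Complex.I * ↑B * ↑t) : ℂ) := by
    funext t; show _ / _ * Complex.sin _ * _ = _; push_cast
    field_simp
  clear_value z w
  have hc : HasDerivAt (fun t : ℝ => ((Real.cos (t*μ) : ℝ) : ℂ))
      (↑(-Real.sin (s*μ) * μ)) s :=
    by have := ((Real.hasDerivAt_cos (s*μ)).comp s (hasDerivAt_mul_const μ)).ofReal_comp; exact this
  have hsn : HasDerivAt (fun t : ℝ => ((Real.sin (t*μ) : ℝ) : ℂ))
      (↑(Real.cos (s*μ) * μ)) s :=
    by have := ((Real.hasDerivAt_sin (s*μ)).comp s (hasDerivAt_mul_const μ)).ofReal_comp; exact this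
  have hlin : HasDerivAt (fun t : ℝ => ((t : ℝ) : ℂ)) 1 s :=
    (hasDerivAt_id s).ofReal_comp
  have he1 : HasDerivAt (fun t : ℝ => Complex.exp (-Complex.I * ↑B * ↑t))
      (Complex.exp (-Complex.I * ↑B * ↑s) * (-Complex.I * ↑B)) s := by
    simpa using (hlin.const_mul (-Complex.I * (B:ℂ))).cexp
  have he2 : HasDerivAt (fun t : ℝ => Complex.exp (Complex.I * ↑B * ↑t))
      (Complex.exp (Complex.I * ↑B * ↑s) * (Complex.I * ↑B)) s := by
    simpa using (hlin.const_mul (Complex.I * (B:ℂ))).cexp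
  have hz' : HasDerivAt z
      ((↑(-Real.sin (s*μ) * μ) + Complex.I * ↑(B/μ) * ↑(Real.cos (s*μ) * μ))
          * Complex.exp (-Complex.I * ↑B * ↑s)
        + (↑(Real.cos (s*μ)) + Complex.I * ↑(B/μ) * ↑(Real.sin (s*μ)))
          * (Complex.exp (-Complex.I * ↑B * ↑s) * (-Complex.I * ↑B))) s := by
    rw [hzdef]
    have := (hc.add ((hsn).const_mul (Complex.I * ↑(B/μ)))).mul he1
    exact this
  have hw' : HasDerivAt w
      ((↑(C/μ) + Complex.I * ↑(D/μ)) * ↑(Real.cos (s*μ) * μ)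
          * Complex.exp (Complex.I * ↑B * ↑s)
        + (↑(C/μ) + Complex.I * ↑(D/μ)) * ↑(Real.sin (s*μ))
          * (Complex.exp (Complex.I * ↑B * ↑s) * (Complex.I * ↑B))) s := by
    rw [hwdef]
    exact ((hsn.const_mul _).mul he2)
  rw [hz'.deriv, hw'.deriv, hzdef, hwdef]
  have hE2 : Complex.exp (Complex.I * (B:ℂ) * (s:ℂ))
      = ↑(Real.cos (B*s)) + ↑(Real.sin (B*s)) * Complex.I := by
    rw [show Complex.I * (B:ℂ) * (s:ℂ) = ((B*s : ℝ) : ℂ) * Complex.I by push_cast; ring,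
      Complex.exp_mul_I, Complex.ofReal_cos, Complex.ofReal_sin]
  have hE1 : Complex.exp (-Complex.I * (B:ℂ) * (s:ℂ))
      = ↑(Real.cos (B*s)) - ↑(Real.sin (B*s)) * Complex.I := by
    rw [show -Complex.I * (B:ℂ) * (s:ℂ) = ((-(B*s) : ℝ) : ℂ) * Complex.I by push_cast; ring,
      Complex.exp_mul_I, Complex.ofReal_neg, Complex.cos_neg, Complex.sin_neg,
      Complex.ofReal_cos, Complex.ofReal_sin]
    ring
  beta_reduce
  rw [hE1, hE2]
  simp only [map_add, map_mul, map_sub, Complex.conj_I, Complex.conj_ofReal,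
    Complex.add_im, Complex.add_re, Complex.sub_im, Complex.sub_re,
    Complex.mul_im, Complex.mul_re, Complex.neg_im, Complex.neg_re,
    Complex.I_re, Complex.I_im, Complex.ofReal_re, Complex.ofReal_im,
    map_neg]
  set c1 := Real.cos (s*μ) with hc1
  set s1 := Real.sin (s*μ) with hs1
  set c2 := Real.cos (B*s) with hc2
  set s2 := Real.sin (B*s) with hs2
  have h1 : s1^2 + c1^2 = 1 := Real.sin_sq_add_cos_sq _
  have h2 : s2^2 + c2^2 = 1 := Real.sin_sq_add_cos_sq _
  have hinv : μ * μ⁻¹ = 1 := mul_inv_cancel₀ hμ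
  linear_combination (B*(c2^2+s2^2)*s1^2*μ⁻¹^2) * hμ2
    + (B*(c2^2+s2^2)*(c1^2 - s1^2*μ*μ⁻¹)) * hinv
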